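/- An ACID instance has a solution with budget D if and only if the corresponding Agent-Edge MAPF instance on the Constrained Graph has a non-colliding solution P' with ‖P'‖ ≤ ‖P‖ + D. -/

import Mathlib

variable {V : Type*}

/-- The (padded) position of a path at time `t`: after the path ends the agent
stays at its final vertex. -/
def padPos [Inhabited V] (π : List V) (t : ℕ) : V :=
  π.getD (min t (π.length - 1)) default

/-- Two (padded) paths are non-colliding: at every time step they occupy distinct
vertices and they never swap along an edge. -/
def NonColliding [Inhabited V] (π₁ π₂ : List V) : Prop :=
  (∀ t, padPos π₁ t ≠ padPos π₂ t) ∧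
  ∀ t, (padPos π₁ t, padPos π₁ (t + 1)) ≠ (padPos π₂ (t + 1), padPos π₂ t)

/-- The path obtained from `π` by repeating its `j`-th vertex an additional `ks[j]` times. -/
def delayPath (π : List V) (ks : List ℕ) : List V :=
  (List.zipWith (fun v k => List.replicate (k + 1) v) π ks).flatten

/-- `π'` is a `d`-delay of `π`. -/
def IsDelay (d : ℕ) (π π' : List V) : Prop :=
  ∃ ks : List ℕ, ks.length = π.length ∧ ks.sum = d ∧ π' = delayPath π ks

/-- Agent-specific edges of the Constrained Graph of a path `π` (0-indexed):
from `(π[j], j)` (for `j+1 < |π|`) one may advance to `(π[j+1], j+1)` or take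
the self-loop back to `(π[j], j)`. -/
def CGEdge [Inhabited V] (π : List V) (a b : V × ℕ) : Prop :=
  ∃ j, j + 1 < π.length ∧ a = (π.getD j default, j) ∧
    (b = (π.getD (j + 1) default, j + 1) ∨ b = a)

section Aux

variable {α β : Type*}

lemma delayPath_cons (x : α) (l : List α) (k : ℕ) (ks : List ℕ) :
    delayPath (x :: l) (k :: ks) = List.replicate (k + 1) x ++ delayPath l ks := by
  simp [delayPath]

lemma map_delayPath (f : α → β) (l : List α) (ks : List ℕ) :
    (delayPath l ks).map f = delayPath (l.map f) ks := by
  induction l generalizing ks with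
  | nil => simp [delayPath]
  | cons x l ih =>
    cases ks with
    | nil => simp [delayPath]
    | cons k ks => simp [delayPath_cons, ih, List.map_replicate]

lemma padPos_append_replicate [Inhabited V] (l : List V) (v : V)
    (h : l.getLast? = some v) (k : ℕ) :
    padPos (l ++ List.replicate k v) = padPos l := by
  have hl : l ≠ [] := by rintro rfl; simp at h
  have hlen : 1 ≤ l.length := List.length_pos_iff.mpr hl
  have hlast : l[l.length - 1]'(by omega) = v := by
    have h2 := List.getLast?_eq_getLast hl
    rw [h2] at h
    rw [← List.getLast_eq_getElem hl]
    exact Option.some_injective _ h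
  funext t
  unfold padPos
  have hL2 : (l ++ List.replicate k v).length = l.length + k := by simp
  rcases lt_or_ge t l.length with ht | ht
  · have h1 : min t (l.length - 1) = t := by omega
    have h2 : min t ((l ++ List.replicate k v).length - 1) = t := by rw [hL2]; omega
    rw [h1, h2, List.getD_eq_getElem _ _ (by rw [hL2]; omega),
      List.getD_eq_getElem _ _ (by omega), List.getElem_append_left ht]
  · have h1 : min t (l.length - 1) = l.length - 1 := by omega
    have hrhs : l.getD (l.length - 1) default = v := by
      rw [List.getD_eq_getElem _ _ (by omega), hlast]
    rw [h1, hrhs]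
    set i := min t ((l ++ List.replicate k v).length - 1) with hidef
    have hi : i = min t (l.length + k - 1) := by rw [hidef, hL2]
    have hik : i < l.length + k := by omega
    rw [List.getD_eq_getElem _ _ (by rw [hL2]; omega)]
    rcases lt_or_ge i l.length with hil | hil
    · have hieq : i = l.length - 1 := by omega
      rw [List.getElem_append_left hil]
      simp_rw [hieq, hlast]
    · rw [List.getElem_append_right hil]
      simp

lemma getDElem {α : Type*} (l : List α) (d : α) (i : ℕ) (h : i < l.length) :
    l[i]?.getD d = l[i] := by rw [List.getElem?_eq_getElem h]; rfl

lemma enumPairs_getElem (π : List V) (i : ℕ) (h : i < π.length) :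
    ((π.zipIdx)[i]'(by simpa)) = (π[i], i) := by
  simp [List.getElem_zipIdx]

lemma enumPairs_length (π : List V) : (π.zipIdx).length = π.length := by simp

/-- Forward construction: a canonical CG path built from delays. -/
lemma cg_of_ks [Inhabited V] (π : List V) (ks : List ℕ) :
    ∀ (j : ℕ), j + ks.length = π.length → ks ≠ [] → ks.getLast? = some 0 →
    ((delayPath ((π.zipIdx).drop j) ks).Chain' (CGEdge π) ∧
    (delayPath ((π.zipIdx).drop j) ks).head? = some (π.getD j default, j) ∧
    (delayPath ((π.zipIdx).drop j) ks).getLast?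
      = some (π.getD (π.length - 1) default, π.length - 1) ∧
    (delayPath ((π.zipIdx).drop j) ks).length = ks.length + ks.sum ∧
    (delayPath ((π.zipIdx).drop j) ks).map Prod.fst = delayPath (π.drop j) ks) := by
  induction ks with
  | nil => intro j _ h; exact absurd rfl h
  | cons k ks ih =>
    intro j hlen _ hlast
    have hj : j < π.length := by simp at hlen; omega
    have hd1 : (π.zipIdx).drop j
        = (π[j], j) :: (π.zipIdx).drop (j + 1) := by
      rw [List.drop_eq_getElem_cons (by simpa [enumPairs_length]), enumPairs_getElem]
    have hd2 : π.drop j = π[j] :: π.drop (j + 1) := List.drop_eq_getElem_cons hj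
    have hgd : π.getD j default = π[j] := List.getD_eq_getElem π default hj
    cases ks with
    | nil =>
      -- single block: k must be 0, j = π.length - 1
      have hk : k = 0 := by simpa using hlast
      subst hk
      have hjl : j = π.length - 1 := by simp at hlen; omega
      have hdrop1 : (π.zipIdx).drop (j+1) = [] := by
        apply List.drop_eq_nil_of_le; simp at hlen ⊢; omega
      have hdrop2 : π.drop (j+1) = [] := by
        apply List.drop_eq_nil_of_le; simp at hlen ⊢; omega
      rw [hd1, hd2, hdrop1, hdrop2, delayPath_cons, delayPath_cons]
      simp [delayPath, hgd, hjl]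
      exact ⟨List.isChain_singleton _, (getDElem π default _ (by omega)).symm⟩
    | cons k' ks =>
      have hj1 : j + 1 < π.length := by simp at hlen ⊢; omega
      have hlast' : (k' :: ks).getLast? = some 0 := by rwa [List.getLast?_cons_cons] at hlast
      obtain ⟨ich, ihd, ilst, ilen, imap⟩ :=
        ih (j + 1) (by simp at hlen ⊢; omega) (by simp) hlast'
      rw [hd1, delayPath_cons]
      have hself : CGEdge π (π[j], j) (π[j], j) := ⟨j, hj1, by rw [hgd], Or.inr rfl⟩
      have hρ'ne : delayPath ((π.zipIdx).drop (j+1)) (k' :: ks) ≠ [] := by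
        intro hnil; rw [hnil] at ihd; simp at ihd
      refine ⟨?_, ?_, ?_, ?_, ?_⟩
      · apply List.IsChain.append
        · exact List.isChain_replicate_of_rel _ hself
        · exact ich
        · intro x hx y hy
          have hxe : x = (π[j], j) := by
            have : (List.replicate (k+1) (π[j], j)).getLast? = some (π[j], j) := by
              rw [List.getLast?_eq_getLast (by simp), List.getLast_replicate]
            rw [this] at hx; exact (by simpa using hx : _ = x).symm
          have hye : y = (π.getD (j+1) default, j+1) := by
            rw [ihd] at hy; exact (by simpa using hy : _ = y).symm
          exact ⟨j, hj1, by rw [hxe, hgd], Or.inl hye⟩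
      · rw [List.replicate_succ]; simp [hgd, getDElem _ _ _ hj]
      · rw [List.getLast?_append_of_ne_nil _ hρ'ne]; exact ilst
      · simp only [List.length_append, List.length_replicate, ilen]
        simp [List.sum_cons]; omega
      · rw [List.map_append, List.map_replicate, imap, hd2, delayPath_cons]

/-- Backward deconstruction: every CG path comes from delays. -/
lemma ks_of_cg [Inhabited V] (π : List V) :
    ∀ (ρ : List (V × ℕ)) (j : ℕ), j < π.length → ρ.Chain' (CGEdge π) →
    ρ.head? = some (π.getD j default, j) →
    ρ.getLast? = some (π.getD (π.length - 1) default, π.length - 1) →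
    ∃ ks : List ℕ, ks.length = π.length - j ∧ ρ.length = ks.length + ks.sum ∧
      ρ.map Prod.fst = delayPath (π.drop j) ks := by
  intro ρ
  induction ρ with
  | nil => intro j _ _ h; simp at h
  | cons a ρ ih =>
    intro j hj hchain hhead hlast
    have hgd : π.getD j default = π[j] := List.getD_eq_getElem π default hj
    have ha : a = (π[j], j) := by rw [← hgd]; simpa using hhead
    have hd2 : π.drop j = π[j] :: π.drop (j + 1) := List.drop_eq_getElem_cons hj
    cases ρ with
    | nil =>
      have hja : a = (π.getD (π.length - 1) default, π.length - 1) := by simpa using hlast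
      have hjl : j = π.length - 1 := by
        have := congrArg Prod.snd hja; rw [ha] at this; simpa using this
      have hdrop : π.drop (j + 1) = [] := List.drop_eq_nil_of_le (by omega)
      refine ⟨[0], by simp only [List.length_singleton]; omega, by simp, ?_⟩
      rw [hd2, hdrop, delayPath_cons, ha]
      simp [delayPath]
    | cons b ρ' =>
      obtain ⟨hab, hchain'⟩ := List.isChain_cons_cons.mp hchain
      obtain ⟨j', hj', ha', hb⟩ := hab
      have hjj : j = j' := by
        have := congrArg Prod.snd ha'; rw [ha] at this; simpa using this
      subst hjj
      have hlast' : (b :: ρ').getLast? = some (π.getD (π.length - 1) default, π.length - 1) := by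
        rwa [List.getLast?_cons_cons] at hlast
      rcases hb with hb | hb
      · -- advance
        have hhead' : (b :: ρ').head? = some (π.getD (j+1) default, j+1) := by
          simp [hb]
        obtain ⟨ks, hkl, hklen, hkmap⟩ := ih (j + 1) hj' hchain' hhead' hlast'
        refine ⟨0 :: ks, by simp only [List.length_cons, hkl]; omega,
          by simp only [List.length_cons, List.sum_cons] at hklen ⊢; omega, ?_⟩
        rw [hd2, delayPath_cons]
        simp only [List.map_cons] at hkmap ⊢
        rw [hkmap, ha]
        simp
      · -- self-loop
        have hhead' : (b :: ρ').head? = some (π.getD j default, j) := by rw [hb, ha']; rfl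
        obtain ⟨ks, hkl, hklen, hkmap⟩ := ih j hj hchain' hhead' hlast'
        have hksne : ks ≠ [] := by
          intro h; rw [h] at hkl; simp only [List.length_nil] at hkl; omega
        obtain ⟨k, t, rfl⟩ := List.exists_cons_of_ne_nil hksne
        refine ⟨(k + 1) :: t, by simpa using hkl,
          by simp only [List.length_cons, List.sum_cons] at hklen ⊢; omega, ?_⟩
        rw [hd2, delayPath_cons] at hkmap ⊢
        simp only [List.map_cons, List.replicate_succ, List.cons_append] at hkmap ⊢
        rw [ha, hkmap]

lemma delayPath_drop_last [Inhabited V] (π : List V) (hπ : π ≠ []) (ks : List ℕ)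
    (hl : ks.length = π.length) :
    padPos (delayPath π ks) = padPos (delayPath π (ks.dropLast ++ [0])) ∧
    (ks.dropLast ++ [0]).sum ≤ ks.sum := by
  rcases List.eq_nil_or_concat π with rfl | ⟨A, v, rfl⟩
  · exact absurd rfl hπ
  rcases List.eq_nil_or_concat ks with rfl | ⟨B, k, rfl⟩
  · simp at hl
  simp only [List.concat_eq_append] at *
  have hAB : A.length = B.length := by simp at hl; omega
  have key : ∀ m, delayPath (A ++ [v]) (B ++ [m]) =
      (List.zipWith (fun x j => List.replicate (j+1) x) A B).flatten ++ List.replicate (m+1) v := by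
    intro m
    unfold delayPath
    rw [List.zipWith_append hAB]
    simp
  constructor
  · rw [List.dropLast_concat, key k, key 0]
    have : (List.zipWith (fun x j => List.replicate (j+1) x) A B).flatten
        ++ List.replicate (k+1) v =
        ((List.zipWith (fun x j => List.replicate (j+1) x) A B).flatten
        ++ List.replicate (0+1) v) ++ List.replicate k v := by
      simp [List.replicate_succ]
    rw [this]
    apply padPos_append_replicate
    rw [List.getLast?_append_of_ne_nil _ (by simp)]
    simp
  · rw [List.dropLast_concat]; simp

lemma nonColliding_congr [Inhabited V] {a a' b b' : List V}
    (ha : padPos a = padPos a') (hb : padPos b = padPos b') :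
    NonColliding a b ↔ NonColliding a' b' := by
  unfold NonColliding; rw [ha, hb]

end Aux

/-- An ACID instance has a solution with budget `D` iff the Agent-Edge MAPF
instance on the Constrained Graph has a non-colliding solution `P'` (collisions
checked on the projections to the underlying vertices) with `‖P'‖ ≤ ‖P‖ + D`. -/
theorem acid_iff_cg_mapf [Inhabited V] {n : ℕ} (P : Fin n → List V)
    (hP : ∀ i, P i ≠ []) (D : ℕ) :
    (∃ (d : Fin n → ℕ) (P' : Fin n → List V),
        (∀ i, IsDelay (d i) (P i) (P' i)) ∧ (∑ i, d i) ≤ D ∧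
        ∀ i j, i ≠ j → NonColliding (P' i) (P' j)) ↔
    (∃ ρ : Fin n → List (V × ℕ),
        (∀ i, (ρ i).Chain' (CGEdge (P i)) ∧
          (ρ i).head? = some ((P i).getD 0 default, 0) ∧
          (ρ i).getLast? =
            some ((P i).getD ((P i).length - 1) default, (P i).length - 1)) ∧
        (∑ i, (ρ i).length) ≤ (∑ i, (P i).length) + D ∧
        ∀ i j, i ≠ j →
          NonColliding ((ρ i).map Prod.fst) ((ρ j).map Prod.fst)) := by
  constructor
  · rintro ⟨d, P', hdelay, hD, hNC⟩
    choose ks hkl hks hkeq using hdelay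
    have hlenpos : ∀ i, 1 ≤ (P i).length := fun i => List.length_pos_iff.mpr (hP i)
    set ks' : Fin n → List ℕ := fun i => (ks i).dropLast ++ [0] with hks'
    have hks'len : ∀ i, (ks' i).length = (P i).length := by
      intro i
      have : (ks i) ≠ [] := by
        intro h; have := hkl i; rw [h] at this; simp at this; exact absurd this.symm (by have := hlenpos i; omega)
      simp [hks', List.length_dropLast, hkl i]
      have := hlenpos i; omega
    have hF := fun i => cg_of_ks (P i) (ks' i) 0 (by simp [hks'len i]) (by simp [hks'])
      (by rw [hks']; simp)
    refine ⟨fun i => delayPath ((P i).zipIdx) (ks' i), ?_, ?_, ?_⟩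
    · intro i
      obtain ⟨c1, c2, c3, _, _⟩ := hF i
      simp only [List.drop_zero] at c1 c2 c3
      exact ⟨c1, c2, c3⟩
    · calc (∑ i, (delayPath (((P i).zipIdx).drop 0) (ks' i)).length)
          = ∑ i, ((ks' i).length + (ks' i).sum) := by
            refine Finset.sum_congr rfl fun i _ => ?_
            exact (hF i).2.2.2.1
        _ ≤ ∑ i, ((P i).length + d i) := by
            refine Finset.sum_le_sum fun i _ => ?_
            have h1 := (delayPath_drop_last (P i) (hP i) (ks i) (hkl i)).2
            rw [hks'len i]
            have : (ks' i).sum ≤ d i := by rw [← hks i]; exact h1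
            omega
        _ ≤ (∑ i, (P i).length) + D := by
            rw [Finset.sum_add_distrib]; omega
    · intro i j hij
      obtain ⟨_, _, _, _, m1⟩ := hF i
      obtain ⟨_, _, _, _, m2⟩ := hF j
      simp only [List.drop_zero] at m1 m2
      rw [m1, m2]
      have e1 := (delayPath_drop_last (P i) (hP i) (ks i) (hkl i)).1
      have e2 := (delayPath_drop_last (P j) (hP j) (ks j) (hkl j)).1
      have hthis := hNC i j hij
      rw [hkeq i, hkeq j] at hthis
      exact (nonColliding_congr e1 e2).mp hthis
  · rintro ⟨ρ, hcond, hsum, hNC⟩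
    have hlenpos : ∀ i, 0 < (P i).length := fun i => List.length_pos_iff.mpr (hP i)
    have hB := fun i => ks_of_cg (P i) (ρ i) 0 (hlenpos i) (hcond i).1 (hcond i).2.1 (hcond i).2.2
    choose ks hkl hklen hkmap using hB
    refine ⟨fun i => (ks i).sum, fun i => (ρ i).map Prod.fst, ?_, ?_, hNC⟩
    · intro i
      refine ⟨ks i, by rw [hkl i]; omega, rfl, ?_⟩
      show List.map Prod.fst (ρ i) = _
      rw [hkmap i, List.drop_zero]
    · have : ∑ i, ((P i).length + (ks i).sum) ≤ (∑ i, (P i).length) + D := by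
        calc ∑ i, ((P i).length + (ks i).sum) = ∑ i, (ρ i).length := by
              refine Finset.sum_congr rfl fun i _ => ?_
              rw [hklen i, hkl i]; omega
          _ ≤ (∑ i, (P i).length) + D := hsum
      rw [Finset.sum_add_distrib] at this
      have h2 : (∑ i, (ks i).sum) ≤ D := by omega
      simpa using h2
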